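/- Let m ≥ 1 be an integer and γ ∈ (0, 1/2] a real, and set w = (1/2)·ln((1/2 + γ/4)/(1/2 − γ/4)). Let Z_1, …, Z_m be positive reals with Z = Σ_{i=1}^m Z_i, and let D be the distribution on [m] with D(i) = Z_i/Z. Let σ_1, …, σ_m ∈ {±1} be signs (σ_i = c(x_i)·h(x_i), where h agrees with the labeling c exactly when σ_i = +1) and suppose Σ_{i : σ_i = −1} D(i) ≤ 1/2 − γ/4. Define Z'_i = Z_i·exp(−σ_i·w) and Z' = Σ_{i=1}^m Z'_i. Then Z' ≤ Z·√(1 − γ²/4). -/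

import Mathlib

open Finset

noncomputable section

/-- **Single-step exponential-loss decrease in AdaBoost.**
Let `m ≥ 1`, `γ ∈ (0, 1/2]`, and `w = (1/2)·ln((1/2 + γ/4)/(1/2 - γ/4))`. Let
`Z₁, …, Z_m > 0` with `Z = Σ Zᵢ` and `D(i) = Zᵢ/Z`. Let `σᵢ ∈ {±1}` with
`Σ_{i : σᵢ = -1} D(i) ≤ 1/2 - γ/4`, and set `Z'ᵢ = Zᵢ·exp(-σᵢw)`, `Z' = Σ Z'ᵢ`.
Then `Z' ≤ Z·√(1 - γ²/4)`. -/
theorem adaboost_exp_loss_step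
    (m : ℕ) (hm : 1 ≤ m)
    (γ : ℝ) (hγ0 : 0 < γ) (hγ1 : γ ≤ 1 / 2)
    (w : ℝ) (hw : w = (1 / 2) * Real.log ((1 / 2 + γ / 4) / (1 / 2 - γ / 4)))
    (Z : Fin m → ℝ) (hZ : ∀ i, 0 < Z i)
    (σ : Fin m → ℝ) (hσ : ∀ i, σ i = 1 ∨ σ i = -1)
    (herr : ∑ i ∈ univ.filter (fun i => σ i = -1), Z i / (∑ j, Z j) ≤ 1 / 2 - γ / 4) :
    ∑ i, Z i * Real.exp (-σ i * w) ≤ (∑ i, Z i) * Real.sqrt (1 - γ ^ 2 / 4) := by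
  set a : ℝ := 1 / 2 + γ / 4 with ha
  set b : ℝ := 1 / 2 - γ / 4 with hb
  have ha0 : 0 < a := by rw [ha]; linarith
  have hb0 : 0 < b := by rw [hb]; linarith
  have hab : 0 < a / b := div_pos ha0 hb0
  have hS : 0 < ∑ j, Z j := Finset.sum_pos (fun i _ => hZ i)
    ⟨⟨0, by omega⟩, Finset.mem_univ _⟩
  set S := ∑ j, Z j with hSdef
  set E := ∑ i ∈ univ.filter (fun i => σ i = -1), Z i with hE
  have hE0 : 0 ≤ E := Finset.sum_nonneg fun i _ => (hZ i).le
  have herr' : E ≤ b * S := by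
    rw [← Finset.sum_div] at herr
    exact (div_le_iff₀ hS).mp herr
  have hew : Real.exp w = Real.sqrt (a / b) := by
    rw [hw, Real.sqrt_eq_rpow, Real.rpow_def_of_pos hab]
    ring_nf
  have hewn : Real.exp (-w) = Real.sqrt (b / a) := by
    rw [Real.exp_neg, hew, ← Real.sqrt_inv, inv_div]
  have hsqab : a * Real.sqrt (b / a) = Real.sqrt (a * b) := by
    rw [← Real.sqrt_sq ha0.le, ← Real.sqrt_mul (by positivity)]
    congr 1
    field_simp
    ring
    rw [Real.sq_sqrt (sq_nonneg a)]
  have hsqba : b * Real.sqrt (a / b) = Real.sqrt (a * b) := by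
    rw [← Real.sqrt_sq hb0.le, ← Real.sqrt_mul (by positivity)]
    congr 1
    field_simp
    ring
    rw [Real.sq_sqrt (sq_nonneg b)]
  have hkey : Real.sqrt (1 - γ ^ 2 / 4) = 2 * Real.sqrt (a * b) := by
    have h4 : (1 : ℝ) - γ ^ 2 / 4 = 2 ^ 2 * (a * b) := by rw [ha, hb]; ring
    rw [h4, Real.sqrt_mul (by positivity), Real.sqrt_sq (by norm_num)]
  have hle : Real.exp (-w) ≤ Real.exp w := by
    rw [hew, hewn]
    apply Real.sqrt_le_sqrt
    rw [div_le_div_iff₀ ha0 hb0, ha, hb]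
    nlinarith [hγ0.le]
  have hsplit : ∑ i, Z i * Real.exp (-σ i * w)
      = E * Real.exp w + (S - E) * Real.exp (-w) := by
    rw [← Finset.sum_filter_add_sum_filter_not univ (fun i => σ i = -1)]
    congr 1
    · rw [hE, Finset.sum_mul]
      refine Finset.sum_congr rfl fun i hi => ?_
      simp only [Finset.mem_filter] at hi
      rw [hi.2]
      norm_num
    · have hcompl : S - E = ∑ i ∈ univ.filter (fun i => ¬ σ i = -1), Z i := by
        rw [hSdef, hE, ← Finset.sum_filter_add_sum_filter_not univ (fun i => σ i = -1)]
        ring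
      rw [hcompl, Finset.sum_mul]
      refine Finset.sum_congr rfl fun i hi => ?_
      simp only [Finset.mem_filter] at hi
      rw [(hσ i).resolve_right hi.2]
      norm_num
  rw [hsplit, hkey]
  have h1 : E * Real.exp w + (S - E) * Real.exp (-w)
      ≤ b * S * Real.exp w + (S - b * S) * Real.exp (-w) := by
    nlinarith [hle, herr']
  have h2 : b * S * Real.exp w + (S - b * S) * Real.exp (-w)
      = S * (b * Real.sqrt (a / b) + a * Real.sqrt (b / a)) := by
    rw [hew, hewn]
    have : S - b * S = a * S := by rw [ha, hb]; ring
    rw [this]; ring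
  rw [h2, hsqab, hsqba] at h1
  linarith [h1]

end
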